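/- Random restriction and biased Fourier coefficients: let f: {±1}ᵐ → ℝ, let μ ∈ (−1,1)ᵐ, set σ_i = √(1−μ_i²), and let ρ be the random restriction where independently each coordinate i is set to ⋆ with probability σ_i²/2, to 1 with probability (1+μ_i)²/4, and to −1 with probability (1−μ_i)²/4. Then for every S ⊆ [m], E_ρ[f̂_ρ(S)] = 2^{−|S|}·(∏_{i∈S} σ_i)·f̂^μ(S), where f̂_ρ(S) is the Fourier coefficient of the restricted function under the uniform measure and f̂^μ(S) is the Fourier coefficient of f in the μ-biased orthonormal basis φ^μ_S(x) = ∏_{i∈S}(x_i−μ_i)/σ_i. -/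
import Mathlib


/-- The value ±1 associated to a boolean. -/
def toPM (b : Bool) : ℝ := if b then 1 else -1

/-- A restriction assigns to each coordinate either `none` (free, ⋆) or a fixed value ±1.
`applyR r x` substitutes the fixed values, leaving `x` on free coordinates. -/
def applyR {m : ℕ} (r : Fin m → Option Bool) (x : Fin m → ℝ) : Fin m → ℝ :=
  fun i => match r i with
    | none => x i
    | some b => toPM b

/-- Fourier coefficient of `g` at `S` with respect to the uniform measure on {±1}^m. -/
noncomputable def hatU {m : ℕ} (g : (Fin m → ℝ) → ℝ) (S : Finset (Fin m)) : ℝ :=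
  ((2:ℝ) ^ m)⁻¹ * ∑ x : Fin m → Bool, g (fun i => toPM (x i)) * ∏ i ∈ S, toPM (x i)

/-- Fourier coefficient of `f` at `S` in the μ-biased orthonormal basis
φ^μ_S(x) = ∏_{i∈S} (x_i − μ_i)/σ_i, under the μ-biased product measure. -/
noncomputable def hatMu {m : ℕ} (μ : Fin m → ℝ) (f : (Fin m → ℝ) → ℝ) (S : Finset (Fin m)) : ℝ :=
  ∑ x : Fin m → Bool,
    (∏ i, (1 + toPM (x i) * μ i) / 2) * f (fun i => toPM (x i)) *
      ∏ i ∈ S, (toPM (x i) - μ i) / Real.sqrt (1 - (μ i) ^ 2)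

/-- Probability weight of the outcome of coordinate `i` under the random restriction. -/
noncomputable def wR {m : ℕ} (μ : Fin m → ℝ) (i : Fin m) : Option Bool → ℝ
  | none => (1 - (μ i) ^ 2) / 2
  | some true => (1 + μ i) ^ 2 / 4
  | some false => (1 - μ i) ^ 2 / 4

lemma applyR_toPM {m : ℕ} (r : Fin m → Option Bool) (x : Fin m → Bool) :
    applyR r (fun i => toPM (x i)) = fun i => toPM ((r i).getD (x i)) := by
  funext i
  cases h : r i <;> simp [applyR, h]

/-- Per-coordinate weight in the expansion of the LHS. -/
noncomputable def Gw {m : ℕ} (μ : Fin m → ℝ) (S : Finset (Fin m)) (y : Fin m → Bool)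
    (i : Fin m) (a : Option Bool) (b : Bool) : ℝ :=
  wR μ i a * 2⁻¹ * (if i ∈ S then toPM b else 1) * (if a.getD b = y i then 1 else 0)

/-- Common per-coordinate factor. -/
noncomputable def cw {m : ℕ} (μ : Fin m → ℝ) (S : Finset (Fin m)) (y : Fin m → Bool)
    (i : Fin m) : ℝ :=
  if i ∈ S then toPM (y i) * ((1 - μ i ^ 2) / 4) else (1 + toPM (y i) * μ i) / 2

lemma Gw_sum {m : ℕ} (μ : Fin m → ℝ) (S : Finset (Fin m)) (y : Fin m → Bool) (i : Fin m) :
    (∑ a : Option Bool, ∑ b : Bool, Gw μ S y i a b) = cw μ S y i := by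
  rw [Fintype.sum_option]
  simp only [Fintype.sum_bool]
  by_cases hi : i ∈ S <;> cases hy : y i <;>
    simp [Gw, cw, wR, hi, hy, toPM] <;> ring

lemma sum_prod_eq_prod_sum {m : ℕ} {β : Fin m → Type*} [∀ i, Fintype (β i)]
    (F : ∀ i, β i → ℝ) :
    (∑ g : (∀ i, β i), ∏ i, F i (g i)) = ∏ i, ∑ b, F i b :=
  (Fintype.prod_sum F).symm

lemma prod_Gw_eq {m : ℕ} (μ : Fin m → ℝ) (S : Finset (Fin m)) (y : Fin m → Bool)
    (r : Fin m → Option Bool) (x : Fin m → Bool) :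
    (∏ i, Gw μ S y i (r i) (x i)) =
      (if (fun i => (r i).getD (x i)) = y then (1:ℝ) else 0) *
        ((∏ i, wR μ i (r i)) * ((2:ℝ) ^ m)⁻¹ * ∏ i ∈ S, toPM (x i)) := by
  unfold Gw
  rw [Finset.prod_mul_distrib, Finset.prod_mul_distrib, Finset.prod_mul_distrib]
  rw [Finset.prod_boole]
  rw [Fintype.prod_extend_by_one S (fun i => toPM (x i))]
  have h2 : (∏ _i : Fin m, (2:ℝ)⁻¹) = ((2:ℝ) ^ m)⁻¹ := by
    simp [Finset.prod_const, inv_pow]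
  rw [h2]
  have h3 : (∀ i ∈ Finset.univ, (r i).getD (x i) = y i) ↔ (fun i => (r i).getD (x i)) = y := by
    simp [funext_iff]
  simp only [h3]
  ring

theorem stmt18 {m : ℕ} (f : (Fin m → ℝ) → ℝ) (μ : Fin m → ℝ)
    (hμ : ∀ i, μ i ∈ Set.Ioo (-1:ℝ) 1) (S : Finset (Fin m)) :
    (∑ r : Fin m → Option Bool, (∏ i, wR μ i (r i)) * hatU (fun x => f (applyR r x)) S) =
      ((2:ℝ) ^ S.card)⁻¹ * (∏ i ∈ S, Real.sqrt (1 - (μ i) ^ 2)) * hatMu μ f S := by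
  classical
  have hpos : ∀ i, (0:ℝ) < 1 - μ i ^ 2 := by
    intro i
    have h1 := (hμ i).1
    have h2 := (hμ i).2
    nlinarith
  have hσ : ∀ i, Real.sqrt (1 - μ i ^ 2) ≠ 0 := fun i =>
    ne_of_gt (Real.sqrt_pos.mpr (hpos i))
  -- Both sides are equal to `∑ y, f (toPM ∘ y) * ∏ i, cw μ S y i`.
  have hL : (∑ r : Fin m → Option Bool,
        (∏ i, wR μ i (r i)) * hatU (fun x => f (applyR r x)) S)
      = ∑ y : Fin m → Bool, f (fun i => toPM (y i)) * ∏ i, cw μ S y i := by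
    have key : ∀ r : Fin m → Option Bool,
        (∏ i, wR μ i (r i)) * hatU (fun x => f (applyR r x)) S
        = ∑ x : Fin m → Bool, ∑ y : Fin m → Bool,
            f (fun i => toPM (y i)) * ∏ i, Gw μ S y i (r i) (x i) := by
      intro r
      unfold hatU
      rw [← mul_assoc, Finset.mul_sum]
      refine Finset.sum_congr rfl fun x _ => ?_
      simp only [applyR_toPM]
      have hs : ∀ y : Fin m → Bool,
          f (fun i => toPM (y i)) * ∏ i, Gw μ S y i (r i) (x i)
          = if (fun i => (r i).getD (x i)) = y then
              f (fun i => toPM (y i)) *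
                ((∏ i, wR μ i (r i)) * ((2:ℝ) ^ m)⁻¹ * ∏ i ∈ S, toPM (x i))
            else 0 := by
        intro y
        rw [prod_Gw_eq]
        split_ifs <;> ring
      rw [Finset.sum_congr rfl fun y _ => hs y]
      rw [Finset.sum_ite_eq Finset.univ (fun i => (r i).getD (x i))]
      simp only [Finset.mem_univ, if_true]
      ring
    rw [Finset.sum_congr rfl fun r _ => key r]
    rw [Finset.sum_congr rfl fun r (_ : r ∈ Finset.univ) =>
      (Finset.sum_comm (s := Finset.univ) (t := Finset.univ)
        (f := fun (x : Fin m → Bool) (y : Fin m → Bool) =>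
          f (fun i => toPM (y i)) * ∏ i, Gw μ S y i (r i) (x i)))]
    rw [Finset.sum_comm]
    have key2 : ∀ y : Fin m → Bool,
        (∑ r : Fin m → Option Bool, ∑ x : Fin m → Bool,
            f (fun i => toPM (y i)) * ∏ i, Gw μ S y i (r i) (x i))
        = f (fun i => toPM (y i)) * ∏ i, cw μ S y i := by
      intro y
      have : (∑ r : Fin m → Option Bool, ∑ x : Fin m → Bool,
            f (fun i => toPM (y i)) * ∏ i, Gw μ S y i (r i) (x i))
          = f (fun i => toPM (y i)) *
              ∑ r : Fin m → Option Bool, ∑ x : Fin m → Bool,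
                ∏ i, Gw μ S y i (r i) (x i) := by
        rw [Finset.mul_sum]
        refine Finset.sum_congr rfl fun r _ => ?_
        rw [Finset.mul_sum]
      rw [this]
      congr 1
      have hx : ∀ r : Fin m → Option Bool,
          (∑ x : Fin m → Bool, ∏ i, Gw μ S y i (r i) (x i))
          = ∏ i, ∑ b : Bool, Gw μ S y i (r i) b :=
        fun r => sum_prod_eq_prod_sum (fun i b => Gw μ S y i (r i) b)
      rw [Finset.sum_congr rfl fun r _ => hx r]
      rw [sum_prod_eq_prod_sum (fun i a => ∑ b : Bool, Gw μ S y i a b)]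
      exact Finset.prod_congr rfl fun i _ => Gw_sum μ S y i
    exact Finset.sum_congr rfl fun y _ => key2 y
  rw [hL]
  -- Now handle the RHS.
  unfold hatMu
  rw [mul_assoc, Finset.mul_sum, Finset.mul_sum]
  refine (Finset.sum_congr rfl fun y _ => ?_).symm
  have h1 : (∏ i ∈ S, Real.sqrt (1 - μ i ^ 2)) *
      (∏ i ∈ S, (toPM (y i) - μ i) / Real.sqrt (1 - μ i ^ 2))
      = ∏ i ∈ S, (toPM (y i) - μ i) := by
    rw [← Finset.prod_mul_distrib]
    refine Finset.prod_congr rfl fun i _ => ?_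
    rw [mul_comm, div_mul_cancel₀ _ (hσ i)]
  have h2 : ((2:ℝ) ^ S.card)⁻¹ * ∏ i ∈ S, (toPM (y i) - μ i)
      = ∏ i ∈ S, (toPM (y i) - μ i) / 2 := by
    rw [Finset.prod_div_distrib, Finset.prod_const, mul_comm, div_eq_mul_inv]
  have h3 : (∏ i, (1 + toPM (y i) * μ i) / 2) * (∏ i ∈ S, (toPM (y i) - μ i) / 2)
      = ∏ i, cw μ S y i := by
    rw [← Fintype.prod_extend_by_one S (fun i => (toPM (y i) - μ i) / 2),
      ← Finset.prod_mul_distrib]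
    refine Finset.prod_congr rfl fun i _ => ?_
    by_cases hi : i ∈ S <;> cases hy : y i <;> simp [cw, hi, hy, toPM] <;> ring
  calc ((2:ℝ) ^ S.card)⁻¹ *
        ((∏ i ∈ S, Real.sqrt (1 - μ i ^ 2)) *
          ((∏ i, (1 + toPM (y i) * μ i) / 2) * f (fun i => toPM (y i)) *
            ∏ i ∈ S, (toPM (y i) - μ i) / Real.sqrt (1 - μ i ^ 2)))
      = f (fun i => toPM (y i)) *
          ((∏ i, (1 + toPM (y i) * μ i) / 2) *
            (((2:ℝ) ^ S.card)⁻¹ *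
              ((∏ i ∈ S, Real.sqrt (1 - μ i ^ 2)) *
                ∏ i ∈ S, (toPM (y i) - μ i) / Real.sqrt (1 - μ i ^ 2)))) := by ring
    _ = f (fun i => toPM (y i)) * ∏ i, cw μ S y i := by rw [h1, h2, h3]
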